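/- Let ψ be a pure state in Schmidt form on ℂ^d ⊗ ℂ^d. The matrix I − (P_ψ)^Γ is positive definite if and only if ψ has Schmidt rank at least 2 (i.e. ψ is entangled). Equivalently, every eigenvalue of (P_ψ)^Γ has modulus strictly less than 1 if and only if ψ is entangled, while if ψ has Schmidt rank 1 then 1 is an eigenvalue of (P_ψ)^Γ. -/

import Mathlib

open Matrix BigOperators
open scoped ComplexOrder

/-- Partial transpose with respect to the first tensor factor:
`X^Γ[(i,j),(k,l)] = X[(k,j),(i,l)]`. -/
def ptg {A B : Type*} (X : Matrix (A × B) (A × B) ℂ) : Matrix (A × B) (A × B) ℂ :=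
  Matrix.of fun p q => X (q.1, p.2) (p.1, q.2)

/-- A pure state in Schmidt form with Schmidt coefficients `μ`:
`ψ[(i,j)] = μ_i δ_{ij}`. -/
noncomputable def schmidtVec {d : ℕ} (μ : Fin d → ℝ) : Fin d × Fin d → ℂ :=
  fun p => if p.1 = p.2 then (μ p.1 : ℂ) else 0

/-- Rank-one projection onto the vector `v`. -/
noncomputable def projVec {n : Type*} (v : n → ℂ) : Matrix n n ℂ :=
  Matrix.of fun p q => v p * star (v q)

/-- The Schmidt rank: the number of nonzero Schmidt coefficients. -/
noncomputable def schmidtRank {d : ℕ} (μ : Fin d → ℝ) : ℕ :=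
  (Finset.univ.filter fun i => μ i ≠ 0).card

lemma ptg_apply {d : ℕ} (μ : Fin d → ℝ) (p q : Fin d × Fin d) :
    ptg (projVec (schmidtVec μ)) p q =
      if q = p.swap then ((μ p.1 * μ p.2 : ℝ) : ℂ) else 0 := by
  rcases p with ⟨i, j⟩; rcases q with ⟨k, l⟩
  simp only [ptg, projVec, schmidtVec, Matrix.of_apply, Prod.swap_prod_mk, Prod.mk.injEq]
  by_cases h1 : k = j <;> by_cases h2 : i = l <;>
    simp [h1, h2, Prod.ext_iff, eq_comm, mul_comm]

lemma mulVec_ptg {d : ℕ} (μ : Fin d → ℝ) (v : Fin d × Fin d → ℂ) (p : Fin d × Fin d) :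
    (ptg (projVec (schmidtVec μ))).mulVec v p = ((μ p.1 * μ p.2 : ℝ) : ℂ) * v p.swap := by
  unfold Matrix.mulVec dotProduct
  simp only [ptg_apply, ite_mul, zero_mul]
  rw [Finset.sum_ite_eq' Finset.univ p.swap (fun q => ((μ p.1 * μ p.2 : ℝ) : ℂ) * v q)]
  simp

lemma herm_ptg {d : ℕ} (μ : Fin d → ℝ) :
    (ptg (projVec (schmidtVec μ))).IsHermitian := by
  ext p q
  rw [conjTranspose_apply, ptg_apply, ptg_apply]
  by_cases h : q = p.swap
  · subst h
    simp [mul_comm]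
  · have h' : p ≠ q.swap := fun hc => h (by simp [hc])
    simp [h, h']

lemma rank_pos' {d : ℕ} (μ : Fin d → ℝ) (hnorm : ∑ i, μ i ^ 2 = 1) :
    1 ≤ schmidtRank μ := by
  have : ∃ i, μ i ≠ 0 := by
    by_contra h; push_neg at h; simp [h] at hnorm
  obtain ⟨i, hi⟩ := this
  have : i ∈ Finset.univ.filter fun i => μ i ≠ 0 := by simp [hi]
  exact Finset.card_pos.mpr ⟨i, this⟩

lemma rank_one_sq {d : ℕ} (μ : Fin d → ℝ) (hnorm : ∑ i, μ i ^ 2 = 1)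
    (h : schmidtRank μ = 1) : ∃ i, μ i ^ 2 = 1 := by
  obtain ⟨i, hi⟩ := Finset.card_eq_one.mp h
  refine ⟨i, ?_⟩
  rw [← hnorm]
  symm
  apply Finset.sum_eq_single
  · intro j _ hj
    have : μ j = 0 := by
      by_contra hc
      have : j ∈ Finset.univ.filter fun i => μ i ≠ 0 := by simp [hc]
      rw [hi] at this
      exact hj (by simpa using this)
    simp [this]
  · simp

lemma mul_lt_one_of_rank2 {d : ℕ} (μ : Fin d → ℝ) (hpos : ∀ i, 0 ≤ μ i)
    (hnorm : ∑ i, μ i ^ 2 = 1) (h2 : 2 ≤ schmidtRank μ) :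
    ∀ i j, μ i * μ j < 1 := by
  intro i j
  by_cases hi : μ i = 0
  · simp [hi]
  by_cases hj : μ j = 0
  · simp [hj]
  by_cases hij : i = j
  · subst hij
    obtain ⟨k, hk, hki⟩ := Finset.exists_mem_ne
      (by unfold schmidtRank at h2; omega : 1 < (Finset.univ.filter fun i => μ i ≠ 0).card) i
    have hk' : μ k ≠ 0 := (Finset.mem_filter.mp hk).2
    have hsum : μ i ^ 2 + μ k ^ 2 ≤ 1 := by
      rw [← hnorm]
      have : ({i, k} : Finset (Fin d)).sum (fun l => μ l ^ 2) ≤ ∑ l, μ l ^ 2 :=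
        Finset.sum_le_sum_of_subset_of_nonneg (Finset.subset_univ _)
          (fun l _ _ => sq_nonneg _)
      rwa [Finset.sum_insert (by simp [Ne.symm hki]), Finset.sum_singleton] at this
    have : 0 < μ k ^ 2 := by positivity
    nlinarith [sq_nonneg (μ i)]
  · have hsum : μ i ^ 2 + μ j ^ 2 ≤ 1 := by
      rw [← hnorm]
      have : ({i, j} : Finset (Fin d)).sum (fun l => μ l ^ 2) ≤ ∑ l, μ l ^ 2 :=
        Finset.sum_le_sum_of_subset_of_nonneg (Finset.subset_univ _)
          (fun l _ _ => sq_nonneg _)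
      rwa [Finset.sum_insert (by simp [hij]), Finset.sum_singleton] at this
    nlinarith [sq_nonneg (μ i - μ j), hpos i, hpos j]

lemma rank_one_eigen {d : ℕ} (μ : Fin d → ℝ) (hnorm : ∑ i, μ i ^ 2 = 1)
    (h : schmidtRank μ = 1) : ∃ v : Fin d × Fin d → ℂ, v ≠ 0 ∧
      (ptg (projVec (schmidtVec μ))).mulVec v = v := by
  obtain ⟨i, hi⟩ := rank_one_sq μ hnorm h
  refine ⟨fun p => if p = (i, i) then 1 else 0, ?_, ?_⟩
  · intro hc
    have := congrFun hc (i, i)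
    simp at this
  · funext p
    rw [mulVec_ptg]
    by_cases hp : p = (i, i)
    · subst hp
      simp
      rw [← Complex.ofReal_mul]
      norm_cast
      nlinarith
    · have hps : p.swap ≠ (i, i) := by
        intro hc
        apply hp
        have := congrArg Prod.swap hc
        simpa using this
      simp [hp, hps]

lemma posdef_of_mul_lt_one {d : ℕ} (μ : Fin d → ℝ) (hpos : ∀ i, 0 ≤ μ i)
    (hd : 0 < d) (hmul : ∀ i j, μ i * μ j < 1) :
    (1 - ptg (projVec (schmidtVec μ))).PosDef := by
  have hne : (Finset.univ : Finset (Fin d × Fin d)).Nonempty := by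
    have : Nonempty (Fin d) := ⟨⟨0, hd⟩⟩
    exact Finset.univ_nonempty
  set c : Fin d × Fin d → ℝ := fun p => μ p.1 * μ p.2 with hc
  have hc0 : ∀ p, 0 ≤ c p := fun p => mul_nonneg (hpos _) (hpos _)
  have hcsw : ∀ p : Fin d × Fin d, c p.swap = c p := fun p => mul_comm _ _
  set t : ℝ := Finset.univ.sup' hne c with ht
  have ht1 : t < 1 := Finset.sup'_lt_iff hne |>.mpr (fun p _ => hmul p.1 p.2)
  have htp : ∀ p, c p ≤ t := fun p => Finset.le_sup' c (Finset.mem_univ p)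
  refine posDef_iff_dotProduct_mulVec.mpr ⟨?_, ?_⟩
  · exact Matrix.isHermitian_one.sub (herm_ptg μ)
  · intro x hx
    rw [sub_mulVec, one_mulVec, dotProduct_sub]
    set N : ℝ := ∑ p, Complex.normSq (x p) with hN
    have hNpos : 0 < N := by
      obtain ⟨p, hp⟩ := Function.ne_iff.mp hx
      have h1 : 0 < Complex.normSq (x p) := Complex.normSq_pos.mpr hp
      have h2 : Complex.normSq (x p) ≤ N :=
        Finset.single_le_sum (fun q _ => Complex.normSq_nonneg _) (Finset.mem_univ p)
      linarith
    have hdx : star x ⬝ᵥ x = (N : ℂ) := by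
      rw [hN]
      push_cast
      refine Finset.sum_congr rfl fun p _ => ?_
      rw [Pi.star_apply, Complex.star_def, Complex.normSq_eq_conj_mul_self]
    set S : ℂ := star x ⬝ᵥ (ptg (projVec (schmidtVec μ))).mulVec x with hS
    have hSx : S = ∑ p, ((c p : ℝ) : ℂ) * ((starRingEnd ℂ) (x p) * x p.swap) := by
      rw [hS, dotProduct]
      refine Finset.sum_congr rfl fun p _ => ?_
      rw [mulVec_ptg, Pi.star_apply, Complex.star_def]
      ring
    -- S is real
    have hconj : (starRingEnd ℂ) S = S := by
      rw [hSx, map_sum]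
      rw [← Equiv.sum_comp (Equiv.prodComm (Fin d) (Fin d))
        (fun p => ((c p : ℝ) : ℂ) * ((starRingEnd ℂ) (x p) * x p.swap))]
      refine Finset.sum_congr rfl fun p _ => ?_
      simp only [Equiv.prodComm_apply, Prod.swap_swap, hcsw, _root_.map_mul,
        Complex.conj_conj, Complex.conj_ofReal]
      ring
    have hSim : S.im = 0 := Complex.conj_eq_iff_im.mp hconj
    -- bound on the real part
    have hSre : S.re ≤ t * N := by
      have step1 : S.re ≤ ∑ p, c p * (‖x p‖ * ‖x p.swap‖) := by
        calc S.re ≤ ‖S‖ := Complex.re_le_norm S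
          _ ≤ ∑ p, ‖((c p : ℝ) : ℂ) * ((starRingEnd ℂ) (x p) * x p.swap)‖ := by
              rw [hSx]; exact norm_sum_le _ _
          _ = ∑ p, c p * (‖x p‖ * ‖x p.swap‖) := by
              refine Finset.sum_congr rfl fun p _ => ?_
              rw [norm_mul, norm_mul, Complex.norm_real, Real.norm_eq_abs, Complex.norm_conj,
                abs_of_nonneg (hc0 p)]
      have step2 : ∑ p, c p * (‖x p‖ * ‖x p.swap‖)
          ≤ ∑ p, c p * Complex.normSq (x p) := by
        have key : ∀ p : Fin d × Fin d, c p * (‖x p‖ * ‖x p.swap‖)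
            ≤ c p * ((Complex.normSq (x p) + Complex.normSq (x p.swap)) / 2) := by
          intro p
          refine mul_le_mul_of_nonneg_left ?_ (hc0 p)
          have h1 : ‖x p‖ ^ 2 = Complex.normSq (x p) := Complex.sq_norm _
          have h2 : ‖x p.swap‖ ^ 2 = Complex.normSq (x p.swap) := Complex.sq_norm _
          nlinarith [sq_nonneg (‖x p‖ - ‖x p.swap‖)]
        calc ∑ p, c p * (‖x p‖ * ‖x p.swap‖)
            ≤ ∑ p, c p * ((Complex.normSq (x p) + Complex.normSq (x p.swap)) / 2) :=
              Finset.sum_le_sum fun p _ => key p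
          _ = ((∑ p, c p * Complex.normSq (x p)) + ∑ p, c p * Complex.normSq (x p.swap)) / 2 := by
              rw [← Finset.sum_add_distrib, Finset.sum_div]
              exact Finset.sum_congr rfl fun p _ => by ring
          _ = ∑ p, c p * Complex.normSq (x p) := by
              have hsw : ∑ p, c p * Complex.normSq (x p.swap)
                  = ∑ p, c p * Complex.normSq (x p) := by
                rw [← Equiv.sum_comp (Equiv.prodComm (Fin d) (Fin d))
                  (fun p => c p * Complex.normSq (x p.swap))]
                simp only [Equiv.prodComm_apply, Prod.swap_swap, hcsw]
              rw [hsw]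
              ring
      have step3 : ∑ p, c p * Complex.normSq (x p) ≤ t * N := by
        rw [hN, Finset.mul_sum]
        exact Finset.sum_le_sum fun p _ =>
          mul_le_mul_of_nonneg_right (htp p) (Complex.normSq_nonneg _)
      linarith
    rw [hdx]
    rw [Complex.lt_def]
    constructor
    · simp only [Complex.sub_re, Complex.ofReal_re, Complex.zero_re]
      nlinarith
    · simp [hSim]


theorem posDef_one_sub_partial_transpose_iff_entangled {d : ℕ} (μ : Fin d → ℝ)
    (hpos : ∀ i, 0 ≤ μ i) (hnorm : ∑ i, μ i ^ 2 = 1) :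
    -- I − (P_ψ)^Γ is positive definite iff ψ is entangled
    ((1 - ptg (projVec (schmidtVec μ))).PosDef ↔ 2 ≤ schmidtRank μ)
    ∧ -- equivalently, every eigenvalue of (P_ψ)^Γ has modulus < 1 iff ψ is entangled
    ((∀ (c : ℂ) (v : Fin d × Fin d → ℂ), v ≠ 0 →
        (ptg (projVec (schmidtVec μ))).mulVec v = c • v → ‖c‖ < 1)
      ↔ 2 ≤ schmidtRank μ)
    ∧ -- while for a Schmidt-rank-one ψ, 1 is an eigenvalue of (P_ψ)^Γ
    (schmidtRank μ = 1 → ∃ v : Fin d × Fin d → ℂ, v ≠ 0 ∧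
        (ptg (projVec (schmidtVec μ))).mulVec v = v) := by
  have hrk1 : 1 ≤ schmidtRank μ := rank_pos' μ hnorm
  have hd : 0 < d := by
    have h0 : 0 < (Finset.univ.filter fun i => μ i ≠ 0).card := hrk1
    obtain ⟨i, _⟩ := Finset.card_pos.mp h0
    exact i.pos
  refine ⟨?_, ?_, fun h => rank_one_eigen μ hnorm h⟩
  · constructor
    · intro hP
      by_contra hlt
      push_neg at hlt
      have hr1 : schmidtRank μ = 1 := by omega
      obtain ⟨v, hv0, hv⟩ := rank_one_eigen μ hnorm hr1
      have := (posDef_iff_dotProduct_mulVec.mp hP).2 hv0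
      rw [sub_mulVec, one_mulVec, hv, sub_self, dotProduct_zero] at this
      exact lt_irrefl _ this
    · intro h2
      exact posdef_of_mul_lt_one μ hpos hd (mul_lt_one_of_rank2 μ hpos hnorm h2)
  · constructor
    · intro h
      by_contra hlt
      push_neg at hlt
      have hr1 : schmidtRank μ = 1 := by omega
      obtain ⟨v, hv0, hv⟩ := rank_one_eigen μ hnorm hr1
      have := h 1 v hv0 (by rw [hv, one_smul])
      simp at this
    · intro h2 c v hv0 heig
      have hmul := mul_lt_one_of_rank2 μ hpos hnorm h2
      obtain ⟨p, hp⟩ := Function.ne_iff.mp hv0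
      have h1 : ((μ p.1 * μ p.2 : ℝ) : ℂ) * v p.swap = c * v p := by
        rw [← mulVec_ptg, heig]; simp
      by_cases hs : v p.swap = 0
      · have hc0 : c = 0 := by
          rw [hs, mul_zero] at h1
          rcases mul_eq_zero.mp h1.symm with h | h
          · exact h
          · exact absurd h hp
        simp [hc0]
      · have h2' : ((μ p.1 * μ p.2 : ℝ) : ℂ) * v p = c * v p.swap := by
          have := mulVec_ptg μ v p.swap
          rw [heig] at this
          simp only [Prod.fst_swap, Prod.snd_swap, Prod.swap_swap, Pi.smul_apply,
            smul_eq_mul] at this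
          rw [this]
          push_cast
          ring
        have hprod : (v p * v p.swap) * (c * c)
            = (v p * v p.swap) * (((μ p.1 * μ p.2 : ℝ) : ℂ) * ((μ p.1 * μ p.2 : ℝ) : ℂ)) := by
          have := congrArg₂ (· * ·) h1 h2'
          linear_combination -this
        have hvv : v p * v p.swap ≠ 0 := mul_ne_zero hp hs
        have hcsq : c * c = ((μ p.1 * μ p.2 : ℝ) : ℂ) * ((μ p.1 * μ p.2 : ℝ) : ℂ) :=
          mul_left_cancel₀ hvv hprod
        have hnc : ‖c‖ * ‖c‖ = (μ p.1 * μ p.2) * (μ p.1 * μ p.2) := by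
          have hr : ‖((μ p.1 * μ p.2 : ℝ) : ℂ)‖ = μ p.1 * μ p.2 := by
            rw [Complex.norm_real, Real.norm_eq_abs,
              abs_of_nonneg (mul_nonneg (hpos _) (hpos _))]
          rw [← norm_mul, hcsq, norm_mul, hr]
        have hle : 0 ≤ μ p.1 * μ p.2 := mul_nonneg (hpos _) (hpos _)
        nlinarith [norm_nonneg c, hmul p.1 p.2]
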